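/- For any ditree T (without boundary vertices), there exists a productless positive label function λ such that (T, λ) is a width tree and netextent(T, λ) = N²₋(T) + N²₊(T) + max|∂S|, the maximum over strong source-sink cuts S of T. -/

import Mathlib

open Finset

/-- A ditree: a directed graph whose underlying undirected graph is a tree. -/
structure Ditree (V : Type) [Fintype V] [DecidableEq V] where
  edges : Finset (V × V)
  irrefl : ∀ e ∈ edges, e.1 ≠ e.2
  antisymm : ∀ a b : V, (a, b) ∈ edges → (b, a) ∉ edges
  isTree : (SimpleGraph.fromRel fun a b => (a, b) ∈ edges).IsTree

namespace Ditree

variable {V : Type} [Fintype V] [DecidableEq V] (T : Ditree V)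

/-- Edges with head at `v`. -/
def incoming (v : V) : Finset (V × V) := T.edges.filter fun e => e.2 = v

/-- Edges with tail at `v`. -/
def outgoing (v : V) : Finset (V × V) := T.edges.filter fun e => e.1 = v

def inDeg (v : V) : ℕ := (T.incoming v).card

def outDeg (v : V) : ℕ := (T.outgoing v).card

/-- A source: no incoming edges. -/
def IsSource (v : V) : Prop := T.incoming v = ∅

/-- A sink: no outgoing edges. -/
def IsSink (v : V) : Prop := T.outgoing v = ∅

/-- Net extent of a labelling: sum over vertices minus sum over edges. -/
def netextent (lv : V → ℤ) (le : V × V → ℤ) : ℤ :=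
  (∑ v, lv v) - ∑ e ∈ T.edges, le e

/-- Width of a labelling. -/
def width (lv : V → ℤ) (le : V × V → ℤ) : ℤ :=
  2 * ((∑ v, (lv v) ^ 2) - ∑ e ∈ T.edges, (le e) ^ 2)

/-- Trunk: the maximum vertex label. -/
def trunk {V : Type} [Fintype V] (hV : Nonempty V) (lv : V → ℤ) : ℤ :=
  Finset.univ.sup' (Finset.univ_nonempty_iff.mpr hV) lv

/-- The width tree conditions: labels are ≥ -1, and each vertex label is at least the sum
of the nonnegative labels on its incoming edges and at least the sum of the nonnegative
labels on its outgoing edges. -/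
def IsWidthTree (lv : V → ℤ) (le : V × V → ℤ) : Prop :=
  (∀ v, -1 ≤ lv v) ∧ (∀ e ∈ T.edges, -1 ≤ le e) ∧
  (∀ v, (∑ e ∈ (T.incoming v).filter (fun e => 0 ≤ le e), le e) ≤ lv v) ∧
  (∀ v, (∑ e ∈ (T.outgoing v).filter (fun e => 0 ≤ le e), le e) ≤ lv v)

/-- All labels are ≥ 1. -/
def IsPositive (lv : V → ℤ) (le : V × V → ℤ) : Prop :=
  (∀ v, 1 ≤ lv v) ∧ ∀ e ∈ T.edges, 1 ≤ le e

/-- All labels are ≥ 0. -/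
def IsNonneg (lv : V → ℤ) (le : V × V → ℤ) : Prop :=
  (∀ v, 0 ≤ lv v) ∧ ∀ e ∈ T.edges, 0 ≤ le e

/-- A product edge: the sole incoming edge at its head (or sole outgoing edge at its tail)
whose label equals the label of that vertex. -/
def IsProductEdge (lv : V → ℤ) (le : V × V → ℤ) (e : V × V) : Prop :=
  e ∈ T.edges ∧
    ((T.incoming e.2 = {e} ∧ le e = lv e.2) ∨ (T.outgoing e.1 = {e} ∧ le e = lv e.1))

def Productless (lv : V → ℤ) (le : V × V → ℤ) : Prop :=
  ∀ e, ¬ T.IsProductEdge lv le e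

/-- A flow: a positive labelling satisfying the flow (conservation) constraints. -/
def IsFlow (Fv : V → ℤ) (Fe : V × V → ℤ) : Prop :=
  (∀ v, 1 ≤ Fv v) ∧ (∀ e ∈ T.edges, 1 ≤ Fe e) ∧
  (∀ v, T.IsSink v → Fv v = ∑ e ∈ T.incoming v, Fe e) ∧
  (∀ v, T.IsSource v → Fv v = ∑ e ∈ T.outgoing v, Fe e) ∧
  (∀ v, ¬ T.IsSource v → ¬ T.IsSink v →
    Fv v = (∑ e ∈ T.incoming v, Fe e) ∧ Fv v = ∑ e ∈ T.outgoing v, Fe e)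

/-- A strong source-sink cut: contains all sources, no sinks, and no edge enters it. -/
def IsCut (S : Finset V) : Prop :=
  (∀ v, T.IsSource v → v ∈ S) ∧ (∀ v ∈ S, ¬ T.IsSink v) ∧
  ∀ e ∈ T.edges, e.2 ∈ S → e.1 ∈ S

/-- The edges leaving a cut. -/
def cutEdges (S : Finset V) : Finset (V × V) :=
  T.edges.filter fun e => e.1 ∈ S ∧ e.2 ∉ S

/-- The size `|∂S|` of a cut. -/
def cutSize (S : Finset V) : ℕ := (T.cutEdges S).card

/-- The value of a flow on a cut. -/
def flowVal (Fe : V × V → ℤ) (S : Finset V) : ℤ := ∑ e ∈ T.cutEdges S, Fe e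

/-- The number of vertices with exactly one incoming edge. -/
def N2minus : ℕ := (univ.filter fun v => T.inDeg v = 1).card

/-- The number of vertices with exactly one outgoing edge. -/
def N2plus : ℕ := (univ.filter fun v => T.outDeg v = 1).card

def inF (Fe : V × V → ℤ) (v : V) : ℤ := ∑ e ∈ T.incoming v, Fe e
def outF (Fe : V × V → ℤ) (v : V) : ℤ := ∑ e ∈ T.outgoing v, Fe e
def phi (Fe : V × V → ℤ) (v : V) : ℤ := T.outF Fe v - T.inF Fe v
def imb (Fe : V × V → ℤ) : ℤ := ∑ v, max (T.phi Fe v) 0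
def Valid (Fe : V × V → ℤ) : Prop := ∀ e ∈ T.edges, 1 ≤ Fe e
def Res (Fe : V × V → ℤ) (x y : V) : Prop :=
  (x, y) ∈ T.edges ∨ ((y, x) ∈ T.edges ∧ 2 ≤ Fe (y, x))
lemma sum_outF (Fe : V × V → ℤ) (S : Finset V) :
    ∑ v ∈ S, T.outF Fe v = ∑ e ∈ T.edges.filter (fun e => e.1 ∈ S), Fe e := by
  simpa [outF, outgoing] using Finset.sum_fiberwise_eq_sum_filter T.edges S Prod.fst Fe
lemma sum_inF (Fe : V × V → ℤ) (S : Finset V) :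
    ∑ v ∈ S, T.inF Fe v = ∑ e ∈ T.edges.filter (fun e => e.2 ∈ S), Fe e := by
  simpa [inF, incoming] using Finset.sum_fiberwise_eq_sum_filter T.edges S Prod.snd Fe

lemma sum_phi_cut (Fe : V × V → ℤ) (S : Finset V)
    (hS : ∀ e ∈ T.edges, e.2 ∈ S → e.1 ∈ S) :
    ∑ v ∈ S, T.phi Fe v = ∑ e ∈ T.cutEdges S, Fe e := by
  unfold phi cutEdges
  rw [Finset.sum_sub_distrib, T.sum_outF Fe S, T.sum_inF Fe S,
    Finset.sum_filter, Finset.sum_filter, Finset.sum_filter, ← Finset.sum_sub_distrib]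
  apply Finset.sum_congr rfl
  intro e he
  by_cases h1 : e.1 ∈ S <;> by_cases h2 : e.2 ∈ S
  · simp [h1, h2]
  · simp [h1, h2]
  · exact absurd (hS e he h2) h1
  · simp [h1, h2]

lemma sum_phi_le_imb (Fe : V × V → ℤ) (S : Finset V) :
    ∑ v ∈ S, T.phi Fe v ≤ T.imb Fe := by
  calc ∑ v ∈ S, T.phi Fe v ≤ ∑ v ∈ S, max (T.phi Fe v) 0 :=
        Finset.sum_le_sum fun v _ => le_max_left _ _
    _ ≤ ∑ v, max (T.phi Fe v) 0 :=
        Finset.sum_le_sum_of_subset_of_nonneg (Finset.subset_univ S)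
          (fun v _ _ => le_max_right _ _)

def push (Fe : V × V → ℤ) (x y : V) : V × V → ℤ :=
  if (x, y) ∈ T.edges then fun e => if e = (x, y) then Fe e + 1 else Fe e
  else fun e => if e = (y, x) then Fe e + (-1) else Fe e

lemma push_eq_of_ne (Fe : V × V → ℤ) (x y : V) (e : V × V)
    (h1 : e ≠ (x, y)) (h2 : e ≠ (y, x)) : T.push Fe x y e = Fe e := by
  unfold push; split <;> simp [h1, h2]

lemma res_ne {Fe : V × V → ℤ} {x y : V} (h : T.Res Fe x y) : x ≠ y := by
  rcases h with h | ⟨h, _⟩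
  · exact T.irrefl _ h
  · exact (T.irrefl _ h).symm

lemma push_valid {Fe : V × V → ℤ} {x y : V} (h : T.Res Fe x y) (hFe : T.Valid Fe) :
    T.Valid (T.push Fe x y) := by
  intro e he
  unfold push
  split
  · show 1 ≤ if e = (x, y) then Fe e + 1 else Fe e
    split
    · have := hFe e he; linarith
    · exact hFe e he
  · rename_i hno
    rcases h with h | ⟨h1, h2⟩
    · exact absurd h hno
    · show 1 ≤ if e = (y, x) then Fe e + (-1) else Fe e
      split
      · rename_i heq; subst heq; linarith
      · exact hFe e he

lemma res_push {Fe : V × V → ℤ} {x y u w : V} (hu : u ≠ x) (hw : w ≠ x)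
    (h : T.Res Fe u w) : T.Res (T.push Fe x y) u w := by
  rcases h with h | ⟨h1, h2⟩
  · exact Or.inl h
  · refine Or.inr ⟨h1, ?_⟩
    rw [T.push_eq_of_ne Fe x y (w, u)
      (fun hc => hw (congrArg Prod.fst hc))
      (fun hc => hu (congrArg Prod.snd hc))]
    exact h2

lemma chain_res_push {Fe : V × V → ℤ} {x y : V} (l : List V) (a : V)
    (ha : a ≠ x) (hl : ∀ u ∈ l, u ≠ x)
    (h : List.Chain (T.Res Fe) a l) : List.Chain (T.Res (T.push Fe x y)) a l := by
  induction l generalizing a with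
  | nil => exact List.Chain.nil
  | cons c l ih =>
      unfold List.Chain at h ⊢
      rw [List.chain_cons] at h ⊢
      exact ⟨T.res_push ha (hl c List.mem_cons_self) h.1,
        ih c (hl c List.mem_cons_self)
          (fun u hu => hl u (List.mem_cons_of_mem _ hu)) h.2⟩

lemma inF_shift (Fe : V × V → ℤ) (δ : ℤ) (c : V × V) (hc : c ∈ T.edges) (v : V) :
    T.inF (fun e => if e = c then Fe e + δ else Fe e) v
      = T.inF Fe v + (if v = c.2 then δ else 0) := by
  unfold inF
  have h1 : ∀ e ∈ T.incoming v,
      (if e = c then Fe e + δ else Fe e) = Fe e + (if e = c then δ else 0) := by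
    intro e _; split <;> simp
  rw [Finset.sum_congr rfl h1, Finset.sum_add_distrib,
    Finset.sum_ite_eq' (T.incoming v) c (fun _ => δ)]
  have : c ∈ T.incoming v ↔ v = c.2 := by
    simp [incoming, hc, eq_comm]
  congr 1
  by_cases hv : v = c.2
  · rw [if_pos (this.mpr hv), if_pos hv]
  · rw [if_neg (fun h => hv (this.mp h)), if_neg hv]

lemma outF_shift (Fe : V × V → ℤ) (δ : ℤ) (c : V × V) (hc : c ∈ T.edges) (v : V) :
    T.outF (fun e => if e = c then Fe e + δ else Fe e) v
      = T.outF Fe v + (if v = c.1 then δ else 0) := by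
  unfold outF
  have h1 : ∀ e ∈ T.outgoing v,
      (if e = c then Fe e + δ else Fe e) = Fe e + (if e = c then δ else 0) := by
    intro e _; split <;> simp
  rw [Finset.sum_congr rfl h1, Finset.sum_add_distrib,
    Finset.sum_ite_eq' (T.outgoing v) c (fun _ => δ)]
  have : c ∈ T.outgoing v ↔ v = c.1 := by
    simp [outgoing, hc, eq_comm]
  congr 1
  by_cases hv : v = c.1
  · rw [if_pos (this.mpr hv), if_pos hv]
  · rw [if_neg (fun h => hv (this.mp h)), if_neg hv]

lemma phi_shift (Fe : V × V → ℤ) (δ : ℤ) (c : V × V) (hc : c ∈ T.edges) (v : V) :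
    T.phi (fun e => if e = c then Fe e + δ else Fe e) v
      = T.phi Fe v + (if v = c.1 then δ else 0) - (if v = c.2 then δ else 0) := by
  unfold phi
  rw [T.inF_shift Fe δ c hc v, T.outF_shift Fe δ c hc v]
  ring

lemma phi_push {Fe : V × V → ℤ} {x y : V} (h : T.Res Fe x y) (v : V) :
    T.phi (T.push Fe x y) v
      = T.phi Fe v + (if v = x then 1 else 0) - (if v = y then 1 else 0) := by
  have hxy : x ≠ y := T.res_ne h
  unfold push
  split
  · rename_i hin
    rw [T.phi_shift Fe 1 (x, y) hin v]
  · rename_i hno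
    rcases h with h | ⟨h1, _⟩
    · exact absurd h hno
    · rw [T.phi_shift Fe (-1) (y, x) h1 v]
      by_cases h2 : v = x <;> by_cases h3 : v = y <;>
        simp [h2, h3, hxy, hxy.symm] <;> ring

lemma imb_push {Fe : V × V → ℤ} {x y : V} (h : T.Res Fe x y) (hx : T.phi Fe x < 0) :
    T.imb (T.push Fe x y)
      = T.imb Fe + (max (T.phi Fe y - 1) 0 - max (T.phi Fe y) 0) := by
  have hxy : x ≠ y := T.res_ne h
  have key : ∀ v ∈ (univ : Finset V), max (T.phi (T.push Fe x y) v) 0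
      = max (T.phi Fe v) 0
        + (if v = y then (max (T.phi Fe y - 1) 0 - max (T.phi Fe y) 0) else 0) := by
    intro v _
    rw [T.phi_push h v]
    by_cases h1 : v = x
    · subst h1
      rw [if_neg hxy, if_pos rfl, if_neg hxy]
      rw [max_eq_right (by linarith), max_eq_right (by linarith)]
      ring
    · by_cases h2 : v = y
      · subst h2
        rw [if_neg h1, if_pos rfl, if_pos rfl]
        ring_nf
      · rw [if_neg h1, if_neg h2, if_neg h2]
        ring_nf
  unfold imb
  rw [Finset.sum_congr rfl key, Finset.sum_add_distrib,
    Finset.sum_ite_eq' (univ : Finset V) y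
      (fun _ => max (T.phi Fe y - 1) 0 - max (T.phi Fe y) 0)]
  simp

lemma aug : ∀ (d : ℕ) (Fe : V × V → ℤ), T.Valid Fe → ∀ (b a : V) (l : List V),
    List.Chain (T.Res Fe) b l → l.length ≤ d → T.phi Fe b < 0 →
    (b :: l).getLast? = some a → 0 < T.phi Fe a →
    ∃ Fe', T.Valid Fe' ∧ T.imb Fe' < T.imb Fe := by
  intro d
  induction d using Nat.strong_induction_on with
  | _ d IH =>
  intro Fe hFe b a l hchain hlen hb hlast hpos
  classical
  set Q : ℕ → Prop := fun k => ∃ l' : List V, l'.length = k ∧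
    List.Chain (T.Res Fe) b l' ∧
    ∃ a', (b :: l').getLast? = some a' ∧ 0 < T.phi Fe a' with hQdef
  have hQex : ∃ k, Q k := ⟨l.length, l, rfl, hchain, a, hlast, hpos⟩
  obtain ⟨l₀, hl₀len, hch₀, a', hlast₀, hpos₀⟩ := Nat.find_spec hQex
  have hnd : Nat.find hQex ≤ d :=
    le_trans (Nat.find_min' hQex ⟨l, rfl, hchain, a, hlast, hpos⟩) hlen
  match l₀, hl₀len, hch₀, hlast₀ with
  | [], hl₀len, hch₀, hlast₀ =>
    -- a' = b
    simp only [List.getLast?_singleton, Option.some.injEq] at hlast₀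
    rw [← hlast₀] at hpos₀
    linarith
  | x :: rest, hl₀len, hch₀, hlast₀ =>
  unfold List.Chain at hch₀
  rw [List.chain_cons] at hch₀
  obtain ⟨hbx, hxrest⟩ := hch₀
  have hbnotin : ∀ u ∈ (x :: rest), u ≠ b := by
    intro u hu hub
    subst hub
    obtain ⟨l₁, l₂, heq⟩ := List.append_of_mem hu
    have hch' : List.Chain (T.Res Fe) u (l₁ ++ u :: l₂) := by
      rw [← heq]; unfold List.Chain; rw [List.chain_cons]; exact ⟨hbx, hxrest⟩
    have hch₂ : List.Chain (T.Res Fe) u l₂ := (List.isChain_cons_split.mp hch').2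
    have hlast₂ : (u :: l₂).getLast? = some a' := by
      rw [← hlast₀]
      have h2 : (u :: x :: rest) = (u :: l₁) ++ (u :: l₂) := by
        rw [heq]; simp
      rw [h2, List.getLast?_append,
        List.getLast?_eq_getLast (l := u :: l₂) (List.cons_ne_nil _ _), Option.or]
    have hQ2 : Q l₂.length := ⟨l₂, rfl, hch₂, a', hlast₂, hpos₀⟩
    have hlt : l₂.length < Nat.find hQex := by
      have : (x :: rest).length = l₁.length + 1 + l₂.length := by
        rw [heq]; simp only [List.length_append, List.length_cons]; omega
      omega
    exact Nat.find_min hQex hlt hQ2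
  have hxb : x ≠ b := hbnotin x List.mem_cons_self
  have hval1 : T.Valid (T.push Fe b x) := T.push_valid hbx hFe
  by_cases hx : 0 < T.phi Fe x
  · refine ⟨T.push Fe b x, hval1, ?_⟩
    rw [T.imb_push hbx hb, max_eq_left (by linarith), max_eq_left (by linarith)]
    linarith
  · push_neg at hx
    match rest, hxrest, hlast₀, hbnotin, hl₀len with
    | [], hxrest, hlast₀, hbnotin, hl₀len =>
      -- a' = x, contradiction with hx
      simp only [List.getLast?_cons_cons, List.getLast?_singleton,
        Option.some.injEq] at hlast₀
      rw [← hlast₀] at hpos₀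
      linarith
    | y :: rest', hxrest, hlast₀, hbnotin, hl₀len =>
    have himb1 : T.imb (T.push Fe b x) = T.imb Fe := by
      rw [T.imb_push hbx hb, max_eq_right (by linarith), max_eq_right (by linarith)]
      ring
    have hch1 : List.Chain (T.Res (T.push Fe b x)) x (y :: rest') :=
      T.chain_res_push (y :: rest') x hxb
        (fun u hu => hbnotin u (List.mem_cons_of_mem _ hu)) hxrest
    have hphix : T.phi (T.push Fe b x) x < 0 := by
      rw [T.phi_push hbx x, if_neg hxb, if_pos rfl]
      linarith
    have hlast1 : (x :: y :: rest').getLast? = some a' := by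
      rw [← hlast₀]; simp
    have hax : a' ≠ x := fun hc => by rw [hc] at hpos₀; linarith
    have hab : a' ≠ b := fun hc => by rw [hc] at hpos₀; linarith
    have hphia : 0 < T.phi (T.push Fe b x) a' := by
      rw [T.phi_push hbx a', if_neg hab, if_neg hax]
      linarith
    have hlen' : (y :: rest').length < d := by
      have : (x :: y :: rest').length = Nat.find hQex := hl₀len
      simp only [List.length_cons] at this ⊢
      omega
    obtain ⟨Fe', hFe', hlt⟩ := IH (y :: rest').length hlen' (T.push Fe b x) hval1
      x a' (y :: rest') hch1 le_rfl hphix hlast1 hphia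
    exact ⟨Fe', hFe', by linarith⟩



lemma cut_le_sum_phi (Fe : V × V → ℤ) (hFe : T.Valid Fe) (S : Finset V)
    (hS : ∀ e ∈ T.edges, e.2 ∈ S → e.1 ∈ S) :
    (T.cutSize S : ℤ) ≤ ∑ v ∈ S, T.phi Fe v := by
  rw [T.sum_phi_cut Fe S hS]
  calc (T.cutSize S : ℤ) = ∑ _e ∈ T.cutEdges S, (1 : ℤ) := by simp [cutSize]
    _ ≤ ∑ e ∈ T.cutEdges S, Fe e :=
        Finset.sum_le_sum fun e he => hFe e (Finset.filter_subset _ _ he)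


lemma imb_nonneg (Fe : V × V → ℤ) : 0 ≤ T.imb Fe :=
  Finset.sum_nonneg fun _ _ => le_max_right _ _

lemma sum_inF_univ (Fe : V × V → ℤ) :
    ∑ v, T.inF Fe v = ∑ e ∈ T.edges, Fe e := by
  rw [T.sum_inF Fe univ]
  congr 1
  exact Finset.filter_true_of_mem fun e _ => Finset.mem_univ _

end Ditree

open Ditree

/-- for any ditree there is a productless positive labelling achieving
netextent = N²₋ + N²₊ + max|∂S|, the maximum over strong source-sink cuts. -/
theorem stmt10 {V : Type} [Fintype V] [DecidableEq V] (T : Ditree V) (m : ℕ)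
    (hmax : ∃ S : Finset V, T.IsCut S ∧ T.cutSize S = m)
    (hub : ∀ S : Finset V, T.IsCut S → T.cutSize S ≤ m) :
    ∃ (lv : V → ℤ) (le : V × V → ℤ),
      T.IsWidthTree lv le ∧ T.IsPositive lv le ∧ T.Productless lv le ∧
      T.netextent lv le = (T.N2minus : ℤ) + T.N2plus + m := by
  classical
  obtain ⟨S₀, hS₀cut, hS₀size⟩ := hmax
  -- a minimizing valid flow
  have hQex : ∃ n, ∃ Fe : V × V → ℤ, T.Valid Fe ∧ (T.imb Fe).toNat = n :=
    ⟨_, fun _ => 1, fun e _ => le_refl 1, rfl⟩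
  obtain ⟨Fe, hFe, hFeN⟩ := Nat.find_spec hQex
  have hopt : ∀ Fe', T.Valid Fe' → T.imb Fe ≤ T.imb Fe' := by
    intro Fe' h'
    have h1 : Nat.find hQex ≤ (T.imb Fe').toNat := Nat.find_min' hQex ⟨Fe', h', rfl⟩
    have h2 := T.imb_nonneg Fe
    have h3 := T.imb_nonneg Fe'
    omega
  -- the canonical cut
  set S : Finset V := univ.filter
    (fun v => ∃ a, 0 < T.phi Fe a ∧ Relation.ReflTransGen (T.Res Fe) v a) with hSdef
  have hSmem : ∀ v, v ∈ S ↔ ∃ a, 0 < T.phi Fe a ∧ Relation.ReflTransGen (T.Res Fe) v a := by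
    intro v; simp [hSdef]
  have hSnoneg : ∀ v ∈ S, 0 ≤ T.phi Fe v := by
    intro v hv
    by_contra hneg
    push_neg at hneg
    obtain ⟨a, ha, hpath⟩ := (hSmem v).mp hv
    obtain ⟨l, hchain, hlast⟩ := List.exists_isChain_cons_of_relationReflTransGen hpath
    obtain ⟨Fe', hFe', hlt⟩ := T.aug l.length Fe hFe v a l hchain le_rfl hneg
      (by rw [List.getLast?_eq_getLast (List.cons_ne_nil _ _), hlast]) ha
    exact absurd (hopt Fe' hFe') (not_le.mpr hlt)
  have hSpos : ∀ v, 0 < T.phi Fe v → v ∈ S :=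
    fun v hv => (hSmem v).mpr ⟨v, hv, Relation.ReflTransGen.refl⟩
  have hSclosed : ∀ e ∈ T.edges, e.2 ∈ S → e.1 ∈ S := by
    intro e he h2
    obtain ⟨a, ha, hp⟩ := (hSmem _).mp h2
    exact (hSmem _).mpr ⟨a, ha, Relation.ReflTransGen.head (Or.inl (by simpa using he)) hp⟩
  have hnotiso : ∀ v, T.incoming v ≠ ∅ ∨ T.outgoing v ≠ ∅ := by
    intro v
    by_contra h
    push_neg at h
    exact (hS₀cut.2.1 v (hS₀cut.1 v h.1)) h.2
  have hval_in : ∀ v, T.incoming v ≠ ∅ → 1 ≤ T.inF Fe v := by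
    intro v hv
    have h1 : 1 ≤ (T.incoming v).card := Finset.card_pos.mpr
      (Finset.nonempty_iff_ne_empty.mpr hv)
    calc (1 : ℤ) ≤ ((T.incoming v).card : ℤ) := by exact_mod_cast h1
      _ = ∑ _e ∈ T.incoming v, (1 : ℤ) := by simp
      _ ≤ ∑ e ∈ T.incoming v, Fe e :=
          Finset.sum_le_sum fun e he => hFe e (Finset.filter_subset _ _ he)
  have hval_out : ∀ v, T.outgoing v ≠ ∅ → 1 ≤ T.outF Fe v := by
    intro v hv
    have h1 : 1 ≤ (T.outgoing v).card := Finset.card_pos.mpr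
      (Finset.nonempty_iff_ne_empty.mpr hv)
    calc (1 : ℤ) ≤ ((T.outgoing v).card : ℤ) := by exact_mod_cast h1
      _ = ∑ _e ∈ T.outgoing v, (1 : ℤ) := by simp
      _ ≤ ∑ e ∈ T.outgoing v, Fe e :=
          Finset.sum_le_sum fun e he => hFe e (Finset.filter_subset _ _ he)
  have hsource : ∀ v, T.IsSource v → v ∈ S := by
    intro v hv
    apply hSpos
    have ho : T.outgoing v ≠ ∅ := by
      rcases hnotiso v with h | h
      · exact absurd hv h
      · exact h
    have h1 := hval_out v ho
    have hin : T.inF Fe v = 0 := by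
      unfold Ditree.IsSource at hv
      simp [inF, hv]
    unfold phi
    rw [hin]
    linarith
  have hsink : ∀ v ∈ S, ¬ T.IsSink v := by
    intro v hv hsk
    have h0 := hSnoneg v hv
    have hi : T.incoming v ≠ ∅ := by
      rcases hnotiso v with h | h
      · exact h
      · exact absurd hsk h
    have h1 := hval_in v hi
    have hout : T.outF Fe v = 0 := by
      unfold Ditree.IsSink at hsk
      simp [outF, hsk]
    unfold phi at h0
    rw [hout] at h0
    linarith
  have hScut : T.IsCut S := ⟨hsource, hsink, hSclosed⟩
  have hbdry : ∀ e ∈ T.cutEdges S, Fe e = 1 := by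
    intro e he
    rw [cutEdges, Finset.mem_filter] at he
    obtain ⟨hee, h1, h2⟩ := he
    by_contra hne
    have h2' : 2 ≤ Fe e := by have := hFe e hee; omega
    apply h2
    obtain ⟨a, ha, hp⟩ := (hSmem _).mp h1
    refine (hSmem _).mpr ⟨a, ha, Relation.ReflTransGen.head (Or.inr ⟨?_, ?_⟩) hp⟩
    · simpa using hee
    · simpa using h2'
  have himbS : T.imb Fe = ∑ v ∈ S, T.phi Fe v := by
    unfold imb
    have key : ∀ v ∈ (univ : Finset V),
        max (T.phi Fe v) 0 = if v ∈ S then T.phi Fe v else 0 := by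
      intro v _
      by_cases hv : v ∈ S
      · rw [if_pos hv, max_eq_left (hSnoneg v hv)]
      · have hle : T.phi Fe v ≤ 0 := by
          by_contra hgt
          push_neg at hgt
          exact hv (hSpos v hgt)
        rw [if_neg hv, max_eq_right hle]
    rw [Finset.sum_congr rfl key, Finset.sum_ite_mem, Finset.univ_inter]
  have hcutval : ∑ v ∈ S, T.phi Fe v = (T.cutSize S : ℤ) := by
    rw [T.sum_phi_cut Fe S hSclosed, Finset.sum_congr rfl hbdry]
    simp [cutSize]
  have hm_le : (m : ℤ) ≤ T.imb Fe := by
    have h1 := T.cut_le_sum_phi Fe hFe S₀ hS₀cut.2.2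
    have h2 := T.sum_phi_le_imb Fe S₀
    rw [hS₀size] at h1
    linarith
  have himb : T.imb Fe = (m : ℤ) := by
    have h1 : T.imb Fe ≤ (m : ℤ) := by
      rw [himbS, hcutval]
      exact_mod_cast hub S hScut
    linarith
  -- the labelling
  set lv : V → ℤ := fun v => max (T.inF Fe v) (T.outF Fe v)
    + (if T.inDeg v = 1 then 1 else 0) + (if T.outDeg v = 1 then 1 else 0) with hlvdef
  have hlv1 : ∀ v, 1 ≤ max (T.inF Fe v) (T.outF Fe v) := by
    intro v
    rcases hnotiso v with h | h
    · exact le_trans (hval_in v h) (le_max_left _ _)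
    · exact le_trans (hval_out v h) (le_max_right _ _)
  have hlvpos : ∀ v, 1 ≤ lv v := by
    intro v
    have := hlv1 v
    rw [hlvdef]
    dsimp only
    split_ifs <;> linarith
  refine ⟨lv, Fe, ⟨?_, ?_, ?_, ?_⟩, ⟨hlvpos, hFe⟩, ?_, ?_⟩
  · intro v; linarith [hlvpos v]
  · intro e he; linarith [hFe e he]
  · intro v
    have hfil : (T.incoming v).filter (fun e => 0 ≤ Fe e) = T.incoming v :=
      Finset.filter_true_of_mem fun e he => by
        have := hFe e (Finset.filter_subset _ _ he); linarith
    rw [hfil]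
    have h0 : ∑ e ∈ T.incoming v, Fe e ≤ max (T.inF Fe v) (T.outF Fe v) :=
      le_max_left _ _
    rw [hlvdef]
    dsimp only
    split_ifs <;> linarith
  · intro v
    have hfil : (T.outgoing v).filter (fun e => 0 ≤ Fe e) = T.outgoing v :=
      Finset.filter_true_of_mem fun e he => by
        have := hFe e (Finset.filter_subset _ _ he); linarith
    rw [hfil]
    have h0 : ∑ e ∈ T.outgoing v, Fe e ≤ max (T.inF Fe v) (T.outF Fe v) :=
      le_max_right _ _
    rw [hlvdef]
    dsimp only
    split_ifs <;> linarith
  · -- productless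
    rintro e ⟨he, hc | hc⟩
    · obtain ⟨hin, heq⟩ := hc
      have hdeg : T.inDeg e.2 = 1 := by rw [inDeg, hin, Finset.card_singleton]
      have hinF : T.inF Fe e.2 = Fe e := by rw [inF, hin, Finset.sum_singleton]
      have hle : Fe e ≤ max (T.inF Fe e.2) (T.outF Fe e.2) := hinF ▸ le_max_left _ _
      rw [hlvdef] at heq
      dsimp only at heq
      rw [hdeg, if_pos rfl] at heq
      split_ifs at heq <;> linarith
    · obtain ⟨hout, heq⟩ := hc
      have hdeg : T.outDeg e.1 = 1 := by rw [outDeg, hout, Finset.card_singleton]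
      have houtF : T.outF Fe e.1 = Fe e := by rw [outF, hout, Finset.sum_singleton]
      have hle : Fe e ≤ max (T.inF Fe e.1) (T.outF Fe e.1) := houtF ▸ le_max_right _ _
      rw [hlvdef] at heq
      dsimp only at heq
      rw [hdeg, if_pos rfl] at heq
      split_ifs at heq <;> linarith
  · -- netextent
    unfold netextent
    have hmax_eq : ∀ v, max (T.inF Fe v) (T.outF Fe v) = T.inF Fe v + max (T.phi Fe v) 0 := by
      intro v
      unfold phi
      rcases le_total (T.inF Fe v) (T.outF Fe v) with h | h
      · rw [max_eq_right h, max_eq_left (by linarith)]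
        ring
      · rw [max_eq_left h, max_eq_right (by linarith)]
        ring
    have hsum : ∑ v, lv v = (∑ e ∈ T.edges, Fe e) + (m : ℤ)
        + (T.N2minus : ℤ) + (T.N2plus : ℤ) := by
      rw [hlvdef]
      dsimp only
      rw [Finset.sum_add_distrib, Finset.sum_add_distrib]
      have h1 : ∑ v, max (T.inF Fe v) (T.outF Fe v)
          = (∑ e ∈ T.edges, Fe e) + (m : ℤ) := by
        rw [Finset.sum_congr rfl (fun v _ => hmax_eq v), Finset.sum_add_distrib,
          T.sum_inF_univ Fe]
        have : ∑ v, max (T.phi Fe v) 0 = T.imb Fe := rfl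
        rw [this, himb]
      have h2 : ∑ v, (if T.inDeg v = 1 then (1 : ℤ) else 0) = (T.N2minus : ℤ) := by
        rw [Finset.sum_boole, N2minus]
      have h3 : ∑ v, (if T.outDeg v = 1 then (1 : ℤ) else 0) = (T.N2plus : ℤ) := by
        rw [Finset.sum_boole, N2plus]
      rw [h1, h2, h3]
    rw [hsum]
    ring
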